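/- Let μ, λ ∈ ℝ and let z be a real number with z < 0 or z > 2. Then z is an even eigenvalue of H_{μλ} if and only if Δ(μ,λ;z) = 0. -/

import Mathlib

open MeasureTheory Real Filter Topology

/-- The potential `v(0) = μ`, `v(±1) = λ/2`, `v(x) = 0` for `|x| > 1`. -/
noncomputable def pot (μ lam : ℝ) (x : ℤ) : ℝ :=
  if x = 0 then μ else if x = 1 ∨ x = -1 then lam / 2 else 0

/-- A real number `z` is an *even eigenvalue* of the discrete Schrödinger operator
`H_{μλ}` on `ℓ²(ℤ; ℂ)`, `(H_{μλ}ψ)(x) = ψ(x) − (ψ(x+1) + ψ(x−1))/2 + v(x)ψ(x)`,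
if there is a nonzero even `ψ ∈ ℓ²(ℤ; ℂ)` with `H_{μλ}ψ = zψ`. -/
def IsEvenEigenvalue (μ lam z : ℝ) : Prop :=
  ∃ ψ : lp (fun _ : ℤ => ℂ) 2, ψ ≠ 0 ∧ (∀ x : ℤ, ψ (-x) = ψ x) ∧
    ∀ x : ℤ, ψ x - (ψ (x + 1) + ψ (x - 1)) / 2 + (pot μ lam x : ℂ) * ψ x = (z : ℂ) * ψ x

/-- `a(z) = (1/2π)∫_{−π}^{π} dq/(z − 1 + cos q)`. -/
noncomputable def aF (z : ℝ) : ℝ :=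
  (2 * Real.pi)⁻¹ * ∫ q in (-Real.pi)..Real.pi, (z - 1 + Real.cos q)⁻¹

/-- `b(z) = −(1/2π)∫_{−π}^{π} cos q dq/(z − 1 + cos q)`. -/
noncomputable def bF (z : ℝ) : ℝ :=
  -((2 * Real.pi)⁻¹ * ∫ q in (-Real.pi)..Real.pi, Real.cos q / (z - 1 + Real.cos q))

/-- `c(z) = (1/2π)∫_{−π}^{π} cos² q dq/(z − 1 + cos q)`. -/
noncomputable def cF (z : ℝ) : ℝ :=
  (2 * Real.pi)⁻¹ * ∫ q in (-Real.pi)..Real.pi, (Real.cos q) ^ 2 / (z - 1 + Real.cos q)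

/-- The Fredholm determinant `Δ(μ,λ;z) = (1 − μ a(z))(1 − λ c(z)) − μλ b(z)²`. -/
noncomputable def Δdet (μ lam z : ℝ) : ℝ :=
  (1 - μ * aF z) * (1 - lam * cF z) - μ * lam * (bF z) ^ 2


open scoped ENNReal
open intervalIntegral

section aux

lemma wcos_ne {w : ℝ} (hw : 1 < w ∨ w < -1) (q : ℝ) : w + Real.cos q ≠ 0 := by
  have h1 := Real.neg_one_le_cos q
  have h2 := Real.cos_le_one q
  rcases hw with h | h
  · nlinarith
  · nlinarith

lemma key_integral {w : ℝ} (hw : 1 < w ∨ w < -1) {s : ℝ} (hs : s ^ 2 = w ^ 2 - 1)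
    (hws : 0 < w * s) :
    ∫ q in (-π)..π, (w + Real.cos q)⁻¹ = 2 * π / s := by
  have hs0 : s ≠ 0 := by rintro rfl; simp at hws
  have hw1 : w - 1 ≠ 0 := by rcases hw with h | h <;> nlinarith
  have hw1' : w + 1 ≠ 0 := by rcases hw with h | h <;> nlinarith
  set c : ℝ := (w - 1) / s with hc
  have hcpos : 0 < c := by
    rcases hw with h | h
    · have hsp : 0 < s := by nlinarith
      exact div_pos (by linarith) hsp
    · have hsn : s < 0 := by nlinarith
      exact div_pos_of_neg_of_neg (by linarith) hsn
  set f : ℝ → ℝ := fun q => (w + Real.cos q)⁻¹ with hf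
  have hfc : Continuous f := by
    exact continuous_const.add Real.continuous_cos |>.inv₀ (wcos_ne hw)
  have hint : ∀ a b : ℝ, IntervalIntegrable f volume a b := fun a b =>
    hfc.intervalIntegrable a b
  set G : ℝ → ℝ := fun q => (2 / s) * Real.arctan (c * Real.tan (q / 2)) with hG
  -- derivative
  have hd : ∀ q ∈ Set.Ioo (-π) π, HasDerivAt G (f q) q := by
    intro q hq
    have hcos : 0 < Real.cos (q / 2) := by
      apply Real.cos_pos_of_mem_Ioo
      constructor <;> [linarith [hq.1]; linarith [hq.2]]
    have h1 : HasDerivAt (fun q : ℝ => q / 2) (1 / 2) q := by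
      simpa using (hasDerivAt_id q).div_const 2
    have h2 : HasDerivAt Real.tan (1 / Real.cos (q / 2) ^ 2) (q / 2) :=
      Real.hasDerivAt_tan hcos.ne'
    have h3 := h2.comp q h1
    have h4 := (h3.const_mul c)
    have h5 := (Real.hasDerivAt_arctan (c * Real.tan (q / 2))).comp q h4
    have h6 := h5.const_mul (2 / s)
    convert h6 using 1
    · rfl
    · rfl
    · rfl
    have htan : Real.tan (q / 2) = Real.sin (q / 2) / Real.cos (q / 2) :=
      Real.tan_eq_sin_div_cos _
    have hcq : Real.cos (q / 2) ^ 2 = 1 / 2 + Real.cos q / 2 := by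
      have := Real.cos_sq (q / 2)
      rwa [show 2 * (q / 2) = q by ring] at this
    have hsq : Real.sin (q / 2) ^ 2 = 1 - Real.cos (q / 2) ^ 2 := Real.sin_sq (q / 2)
    have hwc := wcos_ne hw q
    show (w + Real.cos q)⁻¹ = _
    rw [htan, hc]
    have hS : Real.sin (q / 2) ^ 2 = 1 / 2 - Real.cos q / 2 := by rw [hsq, hcq]; ring
    have hden : 1 + ((w - 1) / s * (Real.sin (q / 2) / Real.cos (q / 2))) ^ 2
        = (w + Real.cos q) / ((w + 1) * Real.cos (q / 2) ^ 2) := by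
      field_simp
      linear_combination ((1-w)*(1-Real.cos q)/2) * hs
        + ((w^2-1)*(w-1)) * hS
        + (s^2*(w+1)) * hcq
    rw [hden]
    field_simp
    linear_combination hs
  -- FTC on [0, b] for b < π
  have hpi : (0:ℝ) < π := Real.pi_pos
  have hFTC : ∀ b ∈ Set.Ico (0:ℝ) π, ∫ q in (0:ℝ)..b, f q = G b := by
    intro b hb
    have : ∫ q in (0:ℝ)..b, f q = G b - G 0 := by
      apply intervalIntegral.integral_eq_sub_of_hasDerivAt
      · intro q hq
        apply hd
        rw [Set.uIcc_of_le hb.1] at hq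
        exact ⟨by linarith [hq.1], by linarith [hq.2, hb.2]⟩
      · exact hint 0 b
    have hG0 : G 0 = 0 := by simp [hG]
    rw [this, hG0, sub_zero]
  -- limit of G at π from the left
  have hGlim : Tendsto G (𝓝[<] π) (𝓝 (π / s)) := by
    have h1 : Tendsto (fun q : ℝ => q / 2) (𝓝[<] π) (𝓝[<] (π / 2)) := by
      apply tendsto_nhdsWithin_of_tendsto_nhds_of_eventually_within
      · exact ((continuous_id.div_const 2).tendsto' π (π/2) rfl).mono_left nhdsWithin_le_nhds
      · filter_upwards [self_mem_nhdsWithin] with x (hx : x < π)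
        exact Set.mem_Iio.2 (by linarith)
    have h2 : Tendsto (fun q : ℝ => Real.tan (q / 2)) (𝓝[<] π) atTop :=
      Real.tendsto_tan_pi_div_two.comp h1
    have h3 : Tendsto (fun q : ℝ => c * Real.tan (q / 2)) (𝓝[<] π) atTop :=
      h2.const_mul_atTop hcpos
    have h4 : Tendsto (fun q : ℝ => Real.arctan (c * Real.tan (q / 2))) (𝓝[<] π)
        (𝓝 (π / 2)) :=
      (Real.tendsto_arctan_atTop.mono_right nhdsWithin_le_nhds).comp h3
    have h5 := h4.const_mul (2 / s)
    have he : (2 / s) * (π / 2) = π / s := by ring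
    rw [he] at h5
    exact h5
  -- continuity of the primitive
  have hlim2 : Tendsto (fun b => ∫ q in (0:ℝ)..b, f q) (𝓝[<] π)
      (𝓝 (∫ q in (0:ℝ)..π, f q)) :=
    ((intervalIntegral.continuous_primitive hint 0).tendsto π).mono_left nhdsWithin_le_nhds
  have hlim3 : Tendsto (fun b => ∫ q in (0:ℝ)..b, f q) (𝓝[<] π) (𝓝 (π / s)) := by
    apply hGlim.congr'
    filter_upwards [Ioo_mem_nhdsLT_of_mem (⟨hpi, le_refl π⟩ : π ∈ Set.Ioc 0 π)] with b hb
    exact (hFTC b ⟨hb.1.le, hb.2⟩).symm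
  have hhalf : ∫ q in (0:ℝ)..π, f q = π / s := tendsto_nhds_unique hlim2 hlim3
  have hneg : ∫ q in (-π)..(0:ℝ), f q = π / s := by
    have h := intervalIntegral.integral_comp_neg (a := 0) (b := π) f
    rw [neg_zero] at h
    rw [← h]
    simp only [hf, Real.cos_neg]
    exact hhalf
  have hsplit := intervalIntegral.integral_add_adjacent_intervals (hint (-π) 0) (hint 0 π)
  calc ∫ q in (-π)..π, (w + Real.cos q)⁻¹ = ∫ q in (-π)..π, f q := rfl
    _ = (∫ q in (-π)..(0:ℝ), f q) + ∫ q in (0:ℝ)..π, f q := hsplit.symm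
    _ = π / s + π / s := by rw [hneg, hhalf]
    _ = 2 * π / s := by ring


section abc
variable {z s : ℝ}

lemma aF_eq (hw : 1 < z - 1 ∨ z - 1 < -1) (hs : s ^ 2 = (z - 1) ^ 2 - 1)
    (hws : 0 < (z - 1) * s) : aF z = 1 / s := by
  have hpi : (0:ℝ) < π := Real.pi_pos
  have h := key_integral hw hs hws
  rw [aF]
  have : ∀ q : ℝ, (z - 1 + Real.cos q)⁻¹ = ((z-1) + Real.cos q)⁻¹ := fun q => rfl
  rw [show (∫ q in (-π)..π, (z - 1 + Real.cos q)⁻¹) = ∫ q in (-π)..π, ((z-1) + Real.cos q)⁻¹ from rfl, h]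
  field_simp

lemma bF_eq (hw : 1 < z - 1 ∨ z - 1 < -1) (hs : s ^ 2 = (z - 1) ^ 2 - 1)
    (hws : 0 < (z - 1) * s) : bF z = (z - 1) / s - 1 := by
  have hpi : (0:ℝ) < π := Real.pi_pos
  have hne := wcos_ne hw
  have hcont : Continuous fun q => ((z-1) + Real.cos q)⁻¹ :=
    (continuous_const.add Real.continuous_cos).inv₀ hne
  have hrw : ∀ q : ℝ, Real.cos q / (z - 1 + Real.cos q)
      = 1 - (z - 1) * ((z-1) + Real.cos q)⁻¹ := by
    intro q
    field_simp [hne q]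
    ring
  rw [bF]
  rw [intervalIntegral.integral_congr (g := fun q => 1 - (z - 1) * ((z-1) + Real.cos q)⁻¹)
    (fun q _ => hrw q)]
  rw [intervalIntegral.integral_sub intervalIntegrable_const
    ((hcont.intervalIntegrable _ _).const_mul _),
    intervalIntegral.integral_const_mul, key_integral hw hs hws,
    intervalIntegral.integral_const]
  have hs0 : s ≠ 0 := by rintro rfl; simp at hws
  field_simp
  ring

lemma cF_eq (hw : 1 < z - 1 ∨ z - 1 < -1) (hs : s ^ 2 = (z - 1) ^ 2 - 1)
    (hws : 0 < (z - 1) * s) : cF z = (z - 1) ^ 2 / s - (z - 1) := by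
  have hpi : (0:ℝ) < π := Real.pi_pos
  have hne := wcos_ne hw
  have hcont : Continuous fun q => ((z-1) + Real.cos q)⁻¹ :=
    (continuous_const.add Real.continuous_cos).inv₀ hne
  have hrw : ∀ q : ℝ, (Real.cos q) ^ 2 / (z - 1 + Real.cos q)
      = (Real.cos q - (z - 1)) + (z - 1) ^ 2 * ((z-1) + Real.cos q)⁻¹ := by
    intro q
    field_simp [hne q]
    ring
  rw [cF]
  rw [intervalIntegral.integral_congr
    (g := fun q => (Real.cos q - (z - 1)) + (z - 1) ^ 2 * ((z-1) + Real.cos q)⁻¹)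
    (fun q _ => hrw q)]
  rw [intervalIntegral.integral_add (f := fun q => Real.cos q - (z - 1))
    ((Real.continuous_cos.sub continuous_const).intervalIntegrable _ _)
    ((hcont.intervalIntegrable _ _).const_mul _),
    intervalIntegral.integral_sub (Real.continuous_cos.intervalIntegrable _ _)
      intervalIntegrable_const,
    intervalIntegral.integral_const_mul, key_integral hw hs hws]
  rw [integral_cos, intervalIntegral.integral_const]
  have hs0 : s ≠ 0 := by rintro rfl; simp at hws
  simp only [Real.sin_pi, Real.sin_neg, neg_zero, sub_zero]
  field_simp
  ring

end abc

lemma delta_iff {μ lam z s : ℝ} (hs : s ^ 2 = (z-1) ^ 2 - 1) (hws : 0 < (z-1) * s)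
    (ha : aF z = 1 / s) (hb : bF z = (z-1) / s - 1) (hc : cF z = (z-1) ^ 2 / s - (z-1)) :
    (Δdet μ lam z = 0 ↔ (μ - (z-1)) * (lam - (z-1) - s) = 1) := by
  set w := z - 1 with hwdef
  have hs0 : s ≠ 0 := by rintro rfl; simp at hws
  have hws' : (w - s) * (w + s) = 1 := by linear_combination -hs
  have hwsne : w - s ≠ 0 := by
    intro h
    rw [h] at hws'
    simp at hws'
  have key : s * Δdet μ lam z = (w - s) * ((μ - w) * (lam - w - s) - 1) := by
    rw [Δdet, ha, hb, hc]
    field_simp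
    linear_combination (s*(w-μ)) * hs
  constructor
  · intro h
    rw [h, mul_zero] at key
    have := mul_eq_zero.1 key.symm
    rcases this with h1 | h1
    · exact absurd h1 hwsne
    · linarith
  · intro h
    rw [h, sub_self, mul_zero] at key
    rcases mul_eq_zero.1 key with h1 | h1
    · exact absurd h1 hs0
    · exact h1


lemma pot_neg (μ lam : ℝ) (x : ℤ) : pot μ lam (-x) = pot μ lam x := by
  unfold pot
  split_ifs <;> first | rfl | omega

lemma eigen_iff {μ lam z s : ℝ} (hs : s ^ 2 = (z - 1) ^ 2 - 1) (hws : 0 < (z - 1) * s) :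
    IsEvenEigenvalue μ lam z ↔ (μ - (z - 1)) * (lam - (z - 1) - s) = 1 := by
  have hs0 : s ≠ 0 := by rintro rfl; simp at hws
  set w : ℝ := z - 1 with hwdef
  set t : ℝ := s - w with htdef
  have htq : t ^ 2 + 2 * w * t + 1 = 0 := by rw [htdef]; linear_combination hs
  have ht0 : t ≠ 0 := by
    intro h; rw [h] at htq; norm_num at htq
  have habs : 0 < |s| := abs_pos.2 hs0
  have hs2 : 0 < s ^ 2 := by rw [← sq_abs]; positivity
  have hpos : 0 < w * s - s ^ 2 := by
    have h1 : (w * s - s ^ 2) * (w * s + s ^ 2) = s ^ 2 := by linear_combination -s ^ 2 * hs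
    have h2 : 0 < w * s + s ^ 2 := by positivity
    nlinarith [h1, h2, hs2]
  have ht1 : t ^ 2 < 1 := by rw [htdef]; nlinarith [hpos]
  -- complex versions
  have htqC : (t : ℂ) ^ 2 + 2 * (w : ℂ) * (t : ℂ) + 1 = 0 := by exact_mod_cast congrArg (Complex.ofReal) htq
  have ht0C : (t : ℂ) ≠ 0 := by exact_mod_cast ht0
  have hTnorm : ‖(t : ℂ)‖ < 1 := by
    rw [Complex.norm_real, Real.norm_eq_abs]
    exact abs_lt.2 ⟨by nlinarith [ht1], by nlinarith [ht1]⟩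
  have hTinv : -2 * (w : ℂ) - t = (t : ℂ)⁻¹ := by
    field_simp
    linear_combination -htqC
  constructor
  · -- forward
    rintro ⟨ψ, hne, heven, heq⟩
    have hwC : (w : ℂ) = (z : ℂ) - 1 := by rw [hwdef]; push_cast; ring
    have htC : (t : ℂ) = (s : ℂ) - (w : ℂ) := by rw [htdef]; push_cast; ring
    -- ψ n → 0 along ℕ
    have hsum := (lp.memℓp ψ).summable (by norm_num : 0 < (2 : ℝ≥0∞).toReal)
    have hsumN : Summable fun n : ℕ => ‖ψ (n : ℤ)‖ ^ (2 : ℝ≥0∞).toReal :=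
      hsum.comp_injective (fun a b hab => by exact_mod_cast hab)
    have hlim0 : Tendsto (fun n : ℕ => ‖ψ (n : ℤ)‖ ^ (2 : ℝ≥0∞).toReal) atTop (𝓝 0) :=
      hsumN.tendsto_atTop_zero
    have hnormlim : Tendsto (fun n : ℕ => ‖ψ (n : ℤ)‖) atTop (𝓝 0) := by
      have hrw : ∀ n : ℕ, Real.sqrt (‖ψ (n : ℤ)‖ ^ (2 : ℝ≥0∞).toReal) = ‖ψ (n : ℤ)‖ := by
        intro n
        rw [ENNReal.toReal_ofNat, show ((2 : ℝ)) = ((2 : ℕ) : ℝ) by norm_num,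
          Real.rpow_natCast, Real.sqrt_sq (norm_nonneg _)]
      have h2 := (Real.continuous_sqrt.tendsto 0).comp hlim0
      rw [Real.sqrt_zero] at h2
      exact h2.congr hrw
    have hψlim : Tendsto (fun n : ℕ => ψ (n : ℤ)) atTop (𝓝 0) := by
      rw [tendsto_zero_iff_norm_tendsto_zero]; exact hnormlim
    -- recurrence for x ≥ 2
    have hrec : ∀ n : ℕ, ψ ((n : ℤ) + 3) = -2 * (w : ℂ) * ψ ((n : ℤ) + 2) - ψ ((n : ℤ) + 1) := by
      intro n
      have h := heq ((n : ℤ) + 2)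
      have hpot : pot μ lam ((n : ℤ) + 2) = 0 := by
        unfold pot; split_ifs <;> first | omega | rfl
      rw [hpot, show ((n : ℤ) + 2) + 1 = (n : ℤ) + 3 by ring,
        show ((n : ℤ) + 2) - 1 = (n : ℤ) + 1 by ring] at h
      rw [hwC]
      push_cast at h
      linear_combination -2 * h
    -- the discrete Wronskian-type quantity
    have hphi : ∀ n : ℕ, ψ ((n : ℤ) + 2) - (t : ℂ) * ψ ((n : ℤ) + 1)
        = (ψ 2 - (t : ℂ) * ψ 1) * ((t : ℂ)⁻¹) ^ n := by
      intro n
      induction n with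
      | zero =>
        rw [show ((0:ℕ):ℤ) + 2 = 2 by norm_num, show ((0:ℕ):ℤ) + 1 = 1 by norm_num,
          pow_zero, mul_one]
      | succ k ih =>
        have h3 := hrec k
        have e1 : ((k + 1 : ℕ) : ℤ) + 2 = (k : ℤ) + 3 := by push_cast; ring
        have e2 : ((k + 1 : ℕ) : ℤ) + 1 = (k : ℤ) + 2 := by push_cast; ring
        rw [e1, e2, h3, pow_succ, ← mul_assoc, ← ih, ← hTinv]
        linear_combination (-ψ ((k : ℤ) + 1)) * htqC
    have hc0 : ψ 2 - (t : ℂ) * ψ 1 = 0 := by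
      have hshift2 : Tendsto (fun n : ℕ => ψ ((n : ℤ) + 2)) atTop (𝓝 0) :=
        (hψlim.comp (tendsto_add_atTop_nat 2)).congr
          (fun n => by rw [Function.comp_apply, show ((n + 2 : ℕ) : ℤ) = (n : ℤ) + 2 by push_cast; ring])
      have hshift1 : Tendsto (fun n : ℕ => ψ ((n : ℤ) + 1)) atTop (𝓝 0) :=
        (hψlim.comp (tendsto_add_atTop_nat 1)).congr
          (fun n => by rw [Function.comp_apply, show ((n + 1 : ℕ) : ℤ) = (n : ℤ) + 1 by push_cast; ring])
      have hlim : Tendsto (fun n : ℕ => (ψ 2 - (t : ℂ) * ψ 1) * ((t : ℂ)⁻¹) ^ n) atTop (𝓝 0) := by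
        have := hshift2.sub (hshift1.const_mul (t : ℂ))
        rw [show (0 : ℂ) - (t : ℂ) * 0 = 0 by ring] at this
        exact this.congr (fun n => hphi n)
      have hinv1 : 1 ≤ ‖(t : ℂ)⁻¹‖ := by
        rw [norm_inv]
        have hp : 0 < ‖(t : ℂ)‖ := norm_pos_iff.2 ht0C
        rw [le_inv_comm₀ one_pos hp]
        simpa using hTnorm.le
      have hb : ∀ n : ℕ, ‖ψ 2 - (t : ℂ) * ψ 1‖ ≤ ‖(ψ 2 - (t : ℂ) * ψ 1) * ((t : ℂ)⁻¹) ^ n‖ := by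
        intro n
        rw [norm_mul, norm_pow]
        nlinarith [one_le_pow₀ hinv1 (n := n), norm_nonneg (ψ 2 - (t : ℂ) * ψ 1)]
      have hlimn := hlim.norm
      rw [norm_zero] at hlimn
      have h0 : ‖ψ 2 - (t : ℂ) * ψ 1‖ ≤ 0 := ge_of_tendsto' hlimn hb
      exact norm_le_zero_iff.1 h0
    have hgeo : ∀ n : ℕ, ψ ((n : ℤ) + 1) = ψ 1 * (t : ℂ) ^ n := by
      intro n
      induction n with
      | zero =>
        rw [show ((0:ℕ):ℤ) + 1 = 1 by norm_num, pow_zero, mul_one]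
      | succ k ih =>
        have h := hphi k
        rw [hc0, zero_mul, sub_eq_zero] at h
        have e1 : ((k + 1 : ℕ) : ℤ) + 1 = (k : ℤ) + 2 := by push_cast; ring
        rw [e1, h, ih, pow_succ]; ring
    -- boundary equations
    have h0 := heq 0
    have h1 := heq 1
    have hpot0 : pot μ lam 0 = μ := by simp [pot]
    have hpot1 : pot μ lam 1 = lam / 2 := by simp [pot]
    rw [hpot0, show (0 : ℤ) + 1 = 1 by decide, show (0 : ℤ) - 1 = -1 by decide,
      heven 1] at h0
    rw [hpot1, show (1 : ℤ) + 1 = 2 by decide, show (1 : ℤ) - 1 = 0 by decide] at h1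
    have h2 : ψ 2 = ψ 1 * (t : ℂ) := by
      have hg := hgeo 1
      norm_num at hg
      exact hg
    rw [h2] at h1
    have hA : ψ 1 = ((μ : ℂ) - (w : ℂ)) * ψ 0 := by
      push_cast at h0
      linear_combination -h0 + ψ 0 * hwC
    rw [hA, htC] at h1
    have hfin : (((μ : ℂ) - (w : ℂ)) * ((lam : ℂ) - (w : ℂ) - (s : ℂ)) - 1) * ψ 0 = 0 := by
      push_cast at h1
      linear_combination 2 * h1 + (-2 * ((μ : ℂ) - (w : ℂ)) * ψ 0) * hwC
    rcases eq_or_ne (ψ 0) 0 with hz0 | hz0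
    · -- ψ would be identically zero
      exfalso
      have hψ1 : ψ 1 = 0 := by rw [hA, hz0, mul_zero]
      have hnn : ∀ x : ℤ, 0 ≤ x → ψ x = 0 := by
        intro x hx
        rcases eq_or_lt_of_le hx with h | h
        · rw [← h]; exact hz0
        · obtain ⟨n, rfl⟩ : ∃ n : ℕ, x = (n : ℤ) + 1 := ⟨(x - 1).toNat, by omega⟩
          rw [hgeo n, hψ1, zero_mul]
      have hall : ∀ x : ℤ, ψ x = 0 := by
        intro x
        rcases le_or_gt 0 x with h | h
        · exact hnn x h
        · have he := heven (-x)
          rw [neg_neg] at he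
          rw [he]; exact hnn (-x) (by omega)
      exact hne (lp.ext (funext fun x => by rw [hall x]; simp))
    · have hC : ((μ : ℂ) - (w : ℂ)) * ((lam : ℂ) - (w : ℂ) - (s : ℂ)) = 1 := by
        have h := (mul_eq_zero.1 hfin).resolve_right hz0
        linear_combination h
      exact_mod_cast hC
  · -- backward: construct the eigenfunction
    intro hF
    have hwC : (w : ℂ) = (z : ℂ) - 1 := by rw [hwdef]; push_cast; ring
    have htC : (t : ℂ) = (s : ℂ) - (w : ℂ) := by rw [htdef]; push_cast; ring
    have hFc : ((μ : ℂ) - (w : ℂ)) * ((lam : ℂ) - (w : ℂ) - (s : ℂ)) = 1 := by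
      exact_mod_cast hF
    set B : ℂ := ((μ : ℂ) - (w : ℂ)) with hB
    set ψf : ℤ → ℂ := fun x => if x = 0 then 1 else B * (t : ℂ) ^ (x.natAbs - 1) with hψf
    have hv0 : ψf 0 = 1 := if_pos rfl
    have hv : ∀ x : ℤ, x ≠ 0 → ψf x = B * (t : ℂ) ^ (x.natAbs - 1) := fun x hx => if_neg hx
    have hψeven : ∀ x : ℤ, ψf (-x) = ψf x := by
      intro x
      simp only [hψf, neg_eq_zero, Int.natAbs_neg]
    have hmem : Memℓp ψf 2 := by
      apply memℓp_gen
      have hconv : (fun i : ℤ => ‖ψf i‖ ^ (2 : ℝ≥0∞).toReal)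
          = fun i : ℤ => ‖ψf i‖ ^ (2 : ℕ) := by
        funext i
        rw [ENNReal.toReal_ofNat, show ((2 : ℝ)) = ((2 : ℕ) : ℝ) by norm_num,
          Real.rpow_natCast]
      rw [hconv]
      set M : ℝ := max 1 (‖B‖ ^ 2 / t ^ 2) with hM
      have hM1 : 1 ≤ M := le_max_left _ _
      have hM2 : ‖B‖ ^ 2 / t ^ 2 ≤ M := le_max_right _ _
      have ht2 : 0 < t ^ 2 := by positivity
      have hle : ∀ i : ℤ, ‖ψf i‖ ^ (2:ℕ) ≤ M * (t ^ 2) ^ i.natAbs := by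
        intro i
        by_cases h : i = 0
        · subst h
          rw [hv0]
          simpa using hM1
        · have hn : 1 ≤ i.natAbs := by omega
          rw [hv i h, norm_mul, mul_pow, norm_pow]
          have hnt : ‖(t:ℂ)‖ = |t| := by rw [Complex.norm_real, Real.norm_eq_abs]
          rw [hnt]
          have e1 : (|t| ^ (i.natAbs - 1)) ^ (2:ℕ) = (t ^ 2) ^ (i.natAbs - 1) := by
            rw [← pow_mul, mul_comm, pow_mul, sq_abs]
          rw [e1]
          have e2 : (t ^ 2) ^ i.natAbs = t ^ 2 * (t ^ 2) ^ (i.natAbs - 1) := by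
            rw [← pow_succ']
            congr 1
            omega
          rw [e2]
          have hp : (0:ℝ) ≤ (t ^ 2) ^ (i.natAbs - 1) := by positivity
          have : ‖B‖ ^ 2 ≤ M * t ^ 2 := by
            exact (div_le_iff₀ ht2).1 hM2
          calc ‖B‖ ^ 2 * (t ^ 2) ^ (i.natAbs - 1) ≤ (M * t ^ 2) * (t ^ 2) ^ (i.natAbs - 1) :=
                mul_le_mul_of_nonneg_right this hp
            _ = M * (t ^ 2 * (t ^ 2) ^ (i.natAbs - 1)) := by ring
      have hgeoN : Summable (fun n : ℕ => M * (t ^ 2) ^ n) :=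
        (summable_geometric_of_lt_one (sq_nonneg t) ht1).mul_left M
      have hZ : Summable (fun i : ℤ => M * (t ^ 2) ^ i.natAbs) := by
        apply Summable.of_nat_of_neg
        · simpa using hgeoN
        · simpa using hgeoN
      exact Summable.of_nonneg_of_le (fun i => by positivity) hle hZ
    refine ⟨⟨ψf, hmem⟩, ?_, ?_, ?_⟩
    · intro hcontra
      have h0 : ψf 0 = 0 := by
        have := congrArg (fun f : lp (fun _ : ℤ => ℂ) 2 => (f : ∀ _ : ℤ, ℂ) 0) hcontra
        simpa using this
      rw [hv0] at h0
      exact one_ne_zero h0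
    · intro x
      exact hψeven x
    · -- the eigenvalue equation
      have hmain : ∀ x : ℤ, ψf x - (ψf (x + 1) + ψf (x - 1)) / 2
          + (pot μ lam x : ℂ) * ψf x = (z : ℂ) * ψf x := by
        have key : ∀ x : ℤ, 0 ≤ x → ψf x - (ψf (x + 1) + ψf (x - 1)) / 2
            + (pot μ lam x : ℂ) * ψf x = (z : ℂ) * ψf x := by
          intro x hx
          rcases eq_or_ne x 0 with rfl | hx0
          · rw [show (0:ℤ) + 1 = 1 by decide, show (0:ℤ) - 1 = -1 by decide,
              hv0, hv 1 (by decide), hv (-1) (by decide)]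
            norm_num [pot]
            rw [hwC] at hB
            rw [hB]
            ring
          rcases eq_or_ne x 1 with rfl | hx1
          · rw [show (1:ℤ) + 1 = 2 by decide, show (1:ℤ) - 1 = 0 by decide,
              hv0, hv 1 (by decide), hv 2 (by decide)]
            have hp1 : pot μ lam 1 = lam / 2 := by simp [pot]
            rw [hp1]
            norm_num
            rw [htC, hB]
            linear_combination (1/2 : ℂ) * hFc + ((μ:ℂ) - (w:ℂ)) * hwC
          · -- x ≥ 2
            have hx2 : 2 ≤ x := by omega
            have hpotx : pot μ lam x = 0 := by
              unfold pot; split_ifs <;> first | omega | rfl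
            obtain ⟨m, hm⟩ : ∃ m : ℕ, x.natAbs = m + 2 := ⟨x.natAbs - 2, by omega⟩
            have hmx1 : (x + 1).natAbs = m + 3 := by omega
            have hmx2 : (x - 1).natAbs = m + 1 := by omega
            rw [hpotx, hv x hx0, hv (x+1) (by omega), hv (x-1) (by omega), hm, hmx1, hmx2]
            norm_num
            rw [hwC] at htqC
            linear_combination (-(B * (t:ℂ) ^ m) / 2) * htqC
        intro x
        rcases le_or_gt 0 x with h | h
        · exact key x h
        · have hk := key (-x) (by omega)
          rw [pot_neg] at hk
          rw [show -x + 1 = -(x - 1) by ring, show -x - 1 = -(x + 1) by ring,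
            hψeven, hψeven, hψeven] at hk
          linear_combination hk
      intro x
      exact hmain x



end aux

/-- For `μ, λ ∈ ℝ` and real `z` with `z < 0` or `z > 2`: `z` is an even eigenvalue of
`H_{μλ}` if and only if `Δ(μ,λ;z) = 0`. -/
theorem isEvenEigenvalue_iff_det_eq_zero (μ lam z : ℝ) (hz : z < 0 ∨ 2 < z) :
    IsEvenEigenvalue μ lam z ↔ Δdet μ lam z = 0 := by
  have hw : 1 < z - 1 ∨ z - 1 < -1 := by
    rcases hz with h | h
    · right; linarith
    · left; linarith
  have hw2 : (0:ℝ) < (z - 1) ^ 2 - 1 := by rcases hw with h | h <;> nlinarith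
  set s : ℝ := if 0 < z - 1 then Real.sqrt ((z - 1) ^ 2 - 1)
    else -Real.sqrt ((z - 1) ^ 2 - 1) with hsdef
  have hs : s ^ 2 = (z - 1) ^ 2 - 1 := by
    rw [hsdef]
    split_ifs
    · exact Real.sq_sqrt hw2.le
    · rw [neg_sq]; exact Real.sq_sqrt hw2.le
  have hsq : 0 < Real.sqrt ((z - 1) ^ 2 - 1) := Real.sqrt_pos.2 hw2
  have hws : 0 < (z - 1) * s := by
    rw [hsdef]
    split_ifs with h
    · exact mul_pos h hsq
    · have hneg : z - 1 < 0 := by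
        rcases hw with h' | h'
        · exact absurd h' (by linarith)
        · linarith
      have : 0 < -(z - 1) := by linarith
      nlinarith [mul_pos this hsq]
  exact (eigen_iff hs hws).trans
    (delta_iff hs hws (aF_eq hw hs hws) (bF_eq hw hs hws) (cF_eq hw hs hws)).symm
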